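/- Let ℍ = {z ∈ ℂ : Im z ≥ 0} be the closed upper half-plane with the subspace topology, let S ⊆ ℍ be open in ℍ, and let S_i ⊆ S be an exhausting sequence of open subsets (i.e., every compact subset of S is contained in S_i for all sufficiently large i). Let X be a compact metric space, let u_i : S_i → X be continuous maps, and let u_∞ : S ∩ {z : Im z > 0} → X be a continuous map such that for every compact subset K of S ∩ {z : Im z > 0}, the maps u_i converge to u_∞ uniformly on K (this makes sense since K ⊆ S_i for all large i). Assume moreover that for every z ∈ S with Im z = 0 one has lim_{r→0} limsup_{i→∞} diam(u_i(B_r(z) ∩ S_i)) = 0, where B_r(z) is the open disk of radius r about z and diam denotes the diameter in X. Then u_∞ extends to a continuous map ū : S → X, and u_i converges to ū uniformly on every compact subset of S. -/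
import Mathlib


open Filter Topology

/-- Boundary extension and convergence (from the proof of Proposition 2.6(b)):
continuous maps on an exhausting sequence of open subsets of an open subset `S` of the
closed upper half-plane, converging uniformly on compact subsets of the interior part of
`S` and with vanishing boundary diameters, converge uniformly on compact subsets of `S`
to a continuous extension of the interior limit. -/
theorem boundary_extension_convergence {X : Type*} [MetricSpace X] [CompactSpace X]
    (S : Set ℂ) (hSsub : S ⊆ {z : ℂ | 0 ≤ z.im})
    (hSopen : ∃ V : Set ℂ, IsOpen V ∧ S = V ∩ {z : ℂ | 0 ≤ z.im})
    (Si : ℕ → Set ℂ) (hSisub : ∀ i, Si i ⊆ S)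
    (hSiopen : ∀ i, ∃ V : Set ℂ, IsOpen V ∧ Si i = V ∩ {z : ℂ | 0 ≤ z.im})
    (hexh : ∀ K : Set ℂ, K ⊆ S → IsCompact K → ∀ᶠ i in atTop, K ⊆ Si i)
    (u : ℕ → ℂ → X) (hu : ∀ i, ContinuousOn (u i) (Si i))
    (uinf : ℂ → X) (huinf : ContinuousOn uinf (S ∩ {z : ℂ | 0 < z.im}))
    (hconv : ∀ K : Set ℂ, K ⊆ S ∩ {z : ℂ | 0 < z.im} → IsCompact K →
      TendstoUniformlyOn (fun i => u i) uinf atTop K)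
    (hbdry : ∀ z ∈ S, z.im = 0 → ∀ ε > 0, ∃ r > 0, ∀ᶠ i in atTop,
      Metric.diam (u i '' (Metric.ball z r ∩ Si i)) < ε) :
    ∃ ubar : ℂ → X, ContinuousOn ubar S ∧
      (∀ z ∈ S ∩ {z : ℂ | 0 < z.im}, ubar z = uinf z) ∧
      (∀ K : Set ℂ, K ⊆ S → IsCompact K →
        TendstoUniformlyOn (fun i => u i) ubar atTop K) := by
  classical
  haveI : Nonempty X := ⟨u 0 0⟩
  obtain ⟨V, hVopen, hSV⟩ := hSopen
  -- distance computation for vertical approach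
  have hdist : ∀ (z : ℂ) (t : ℝ), 0 < t → dist (z + (t : ℂ) * Complex.I) z = t := by
    intro z t ht
    rw [Complex.dist_eq]
    simp [abs_of_pos ht]
  -- vertical approach stays in the interior part of S
  have happroach : ∀ z ∈ S, ∃ δ > 0, ∀ t : ℝ, t ∈ Set.Ioo (0 : ℝ) δ →
      z + (t : ℂ) * Complex.I ∈ S ∩ {w : ℂ | 0 < w.im} := by
    intro z hz
    have hzV : z ∈ V := (hSV ▸ hz).1
    obtain ⟨δ, hδ, hball⟩ := Metric.isOpen_iff.1 hVopen z hzV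
    refine ⟨δ, hδ, fun t ht => ?_⟩
    have hmem : z + (t : ℂ) * Complex.I ∈ Metric.ball z δ := by
      rw [Metric.mem_ball, hdist z t ht.1]; exact ht.2
    have him : 0 < (z + (t : ℂ) * Complex.I).im := by
      have := hSsub hz
      simp only [Set.mem_setOf_eq] at this
      simp only [Complex.add_im, Complex.mul_im, Complex.I_im, Complex.I_re,
        Complex.ofReal_re, Complex.ofReal_im]
      nlinarith [ht.1]
    exact ⟨hSV ▸ ⟨hball hmem, le_of_lt him⟩, him⟩
  -- pointwise convergence on the interior
  have hpt : ∀ p ∈ S ∩ {w : ℂ | 0 < w.im}, Tendsto (fun i => u i p) atTop (𝓝 (uinf p)) := by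
    intro p hp
    exact (hconv {p} (Set.singleton_subset_iff.2 hp) isCompact_singleton).tendsto_at rfl
  have hbd : ∀ (s : Set X), Bornology.IsBounded s := fun s =>
    (isCompact_univ.isBounded).subset (Set.subset_univ s)
  -- key pairwise estimate near boundary points
  have key : ∀ z ∈ S, z.im = 0 → ∀ ε > 0, ∃ r > 0,
      ∀ p ∈ Metric.ball z r ∩ (S ∩ {w : ℂ | 0 < w.im}),
      ∀ q ∈ Metric.ball z r ∩ (S ∩ {w : ℂ | 0 < w.im}),
        dist (uinf p) (uinf q) ≤ ε := by
    intro z hz him ε hε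
    obtain ⟨r, hr, hdi⟩ := hbdry z hz him ε hε
    refine ⟨r, hr, fun p hp q hq => ?_⟩
    have hpq : ({p, q} : Set ℂ) ⊆ S := by
      intro x hx
      rcases hx with hx | hx
      · exact hx ▸ hp.2.1
      · exact hx ▸ hq.2.1
    have hev : ∀ᶠ i in atTop, dist (u i p) (u i q) ≤ ε := by
      filter_upwards [hdi, hexh {p, q} hpq (((Set.finite_singleton q).insert p).isCompact)]
        with i hdiam hmem
      have hpSi : p ∈ Si i := hmem (by simp)
      have hqSi : q ∈ Si i := hmem (by simp)
      have h1 : dist (u i p) (u i q) ≤ Metric.diam (u i '' (Metric.ball z r ∩ Si i)) :=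
        Metric.dist_le_diam_of_mem (hbd _) ⟨p, ⟨hp.1, hpSi⟩, rfl⟩ ⟨q, ⟨hq.1, hqSi⟩, rfl⟩
      linarith
    exact le_of_tendsto ((hpt p hp.2).dist (hpt q hq.2)) hev
  -- the extension
  set g : ℂ → ℝ → X := fun z t => uinf (z + (t : ℂ) * Complex.I) with hg
  set ubar : ℂ → X := fun z =>
    if 0 < z.im then uinf z else lim (Filter.map (g z) (𝓝[>] (0 : ℝ))) with hubar
  have hubar_int : ∀ z : ℂ, 0 < z.im → ubar z = uinf z := fun z hz => if_pos hz
  -- the limit exists at boundary points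
  have hlim : ∀ z ∈ S, z.im = 0 → Tendsto (g z) (𝓝[>] (0 : ℝ)) (𝓝 (ubar z)) := by
    intro z hz him
    obtain ⟨δ, hδ, hδmem⟩ := happroach z hz
    have hcauchy : Cauchy (Filter.map (g z) (𝓝[>] (0 : ℝ))) := by
      rw [Metric.cauchy_iff]
      refine ⟨Filter.map_neBot, fun ε hε => ?_⟩
      obtain ⟨r, hr, hkey⟩ := key z hz him (ε / 2) (by linarith)
      set τ := min r δ with hτ
      have hτpos : 0 < τ := lt_min hr hδ
      refine ⟨g z '' Set.Ioo 0 τ, ?_, ?_⟩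
      · apply Filter.image_mem_map
        exact Ioo_mem_nhdsGT_of_mem ⟨le_refl _, hτpos⟩
      · rintro x ⟨s, hs, rfl⟩ y ⟨t, ht, rfl⟩
        have hmem : ∀ a : ℝ, a ∈ Set.Ioo (0:ℝ) τ →
            z + (a : ℂ) * Complex.I ∈ Metric.ball z r ∩ (S ∩ {w : ℂ | 0 < w.im}) := by
          intro a ha
          refine ⟨?_, hδmem a ⟨ha.1, lt_of_lt_of_le ha.2 (min_le_right _ _)⟩⟩
          rw [Metric.mem_ball, hdist z a ha.1]
          exact lt_of_lt_of_le ha.2 (min_le_left _ _)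
        have := hkey _ (hmem s hs) _ (hmem t ht)
        calc dist (g z s) (g z t) ≤ ε / 2 := this
          _ < ε := by linarith
    have : ¬ 0 < z.im := by rw [him]; exact lt_irrefl 0
    have h2 : ubar z = lim (Filter.map (g z) (𝓝[>] (0 : ℝ))) := if_neg this
    rw [h2]
    exact hcauchy.le_nhds_lim
  -- core estimate: near each point of S, u i is eventually close to ubar z
  have core : ∀ z ∈ S, ∀ ε > 0, ∃ r > 0, ∀ᶠ i in atTop,
      ∀ w ∈ Metric.ball z r ∩ Si i, dist (u i w) (ubar z) < ε := by
    intro z hz ε hε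
    rcases eq_or_lt_of_le (show (0:ℝ) ≤ z.im from hSsub hz) with him | him
    · -- boundary case
      have him0 : z.im = 0 := him.symm
      obtain ⟨r, hr, hdi⟩ := hbdry z hz him0 (ε / 4) (by linarith)
      obtain ⟨δ, hδ, hδmem⟩ := happroach z hz
      have hev : ∀ᶠ t in 𝓝[>] (0 : ℝ), dist (g z t) (ubar z) < ε / 4 :=
        (hlim z hz him0) (Metric.ball_mem_nhds _ (by linarith : (0:ℝ) < ε/4))
      have hIoo : Set.Ioo (0 : ℝ) (min r δ) ∈ 𝓝[>] (0 : ℝ) :=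
        Ioo_mem_nhdsGT_of_mem ⟨le_refl _, lt_min hr hδ⟩
      obtain ⟨t, ht1, ht2⟩ := (hev.and (eventually_mem_set.2 hIoo)).exists
      set p := z + (t : ℂ) * Complex.I with hp
      have hpS : p ∈ S ∩ {w : ℂ | 0 < w.im} :=
        hδmem t ⟨ht2.1, lt_of_lt_of_le ht2.2 (min_le_right _ _)⟩
      have hpball : p ∈ Metric.ball z r := by
        rw [Metric.mem_ball, hdist z t ht2.1]
        exact lt_of_lt_of_le ht2.2 (min_le_left _ _)
      have hptp : Tendsto (fun i => u i p) atTop (𝓝 (uinf p)) := hpt p hpS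
      have hevp : ∀ᶠ i in atTop, dist (u i p) (uinf p) < ε / 4 :=
        hptp (Metric.ball_mem_nhds _ (by linarith : (0:ℝ) < ε/4))
      refine ⟨r, hr, ?_⟩
      filter_upwards [hdi, hevp,
        hexh {p} (Set.singleton_subset_iff.2 hpS.1) isCompact_singleton] with i h1 h2 h3
      intro w hw
      have hpSi : p ∈ Si i := h3 rfl
      have hdle : dist (u i w) (u i p) ≤ Metric.diam (u i '' (Metric.ball z r ∩ Si i)) :=
        Metric.dist_le_diam_of_mem (hbd _) ⟨w, hw, rfl⟩ ⟨p, ⟨hpball, hpSi⟩, rfl⟩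
      calc dist (u i w) (ubar z) ≤ dist (u i w) (u i p) + dist (u i p) (uinf p)
            + dist (uinf p) (ubar z) := dist_triangle4 _ _ _ _
        _ < ε/4 + ε/4 + ε/4 := by
            have : dist (uinf p) (ubar z) < ε / 4 := ht1
            linarith
        _ < ε := by linarith
    · -- interior case
      have hzint : z ∈ S ∩ {w : ℂ | 0 < w.im} := ⟨hz, him⟩
      have hU : IsOpen (V ∩ {w : ℂ | 0 < w.im}) :=
        hVopen.inter (isOpen_lt continuous_const Complex.continuous_im)
      have hzU : z ∈ V ∩ {w : ℂ | 0 < w.im} := ⟨(hSV ▸ hz).1, him⟩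
      obtain ⟨r0, hr0, hball0⟩ := Metric.nhds_basis_closedBall.mem_iff.1 (hU.mem_nhds hzU)
      have hUsub : V ∩ {w : ℂ | 0 < w.im} ⊆ S ∩ {w : ℂ | 0 < w.im} := by
        intro x hx
        refine ⟨?_, hx.2⟩
        rw [hSV]
        exact ⟨hx.1, show (0:ℝ) ≤ x.im from le_of_lt (show (0:ℝ) < x.im from hx.2)⟩
      obtain ⟨δ, hδpos, hδ⟩ := Metric.continuousWithinAt_iff.1 (huinf z hzint) (ε/2)
        (by linarith)
      set r := min r0 δ with hr
      have hrpos : 0 < r := lt_min hr0 hδpos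
      have hKsub : Metric.closedBall z r ⊆ S ∩ {w : ℂ | 0 < w.im} :=
        (Metric.closedBall_subset_closedBall (min_le_left _ _)).trans (hball0.trans hUsub)
      have hTU := hconv (Metric.closedBall z r) hKsub (isCompact_closedBall z r)
      have hevU : ∀ᶠ i in atTop, ∀ x ∈ Metric.closedBall z r,
          dist (uinf x) (u i x) < ε / 2 := Metric.tendstoUniformlyOn_iff.1 hTU (ε/2) (by linarith)
      refine ⟨r, hrpos, ?_⟩
      filter_upwards [hevU] with i hi
      intro w hw
      have hwK : w ∈ Metric.closedBall z r := Metric.ball_subset_closedBall hw.1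
      have h1 : dist (uinf w) (u i w) < ε / 2 := hi w hwK
      have h2 : dist (uinf w) (uinf z) < ε / 2 := by
        exact hδ (hKsub hwK) (lt_of_lt_of_le (Metric.mem_ball.1 hw.1) (min_le_right _ _))
      have h3 : ubar z = uinf z := hubar_int z him
      rw [h3]
      calc dist (u i w) (uinf z) ≤ dist (u i w) (uinf w) + dist (uinf w) (uinf z) :=
            dist_triangle _ _ _
        _ < ε / 2 + ε / 2 := by rw [dist_comm (u i w) (uinf w)]; linarith
        _ = ε := by ring
  -- combined local estimate
  have near : ∀ z ∈ S, ∀ ε > 0, ∃ r > 0,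
      (∀ᶠ i in atTop, ∀ w ∈ Metric.ball z r ∩ Si i, dist (u i w) (ubar z) < ε) ∧
      (∀ w ∈ Metric.ball z r ∩ S, dist (ubar w) (ubar z) ≤ ε) := by
    intro z hz ε hε
    obtain ⟨r, hr, hev⟩ := core z hz ε hε
    have hint : ∀ w ∈ Metric.ball z r ∩ S, 0 < w.im → dist (uinf w) (ubar z) ≤ ε := by
      intro w hw hwim
      have hwS : w ∈ S ∩ {x : ℂ | 0 < x.im} := ⟨hw.2, hwim⟩
      have hev2 : ∀ᶠ i in atTop, dist (u i w) (ubar z) ≤ ε := by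
        filter_upwards [hev, hexh {w} (Set.singleton_subset_iff.2 hw.2) isCompact_singleton]
          with i h1 h2
        exact (h1 w ⟨hw.1, h2 rfl⟩).le
      exact le_of_tendsto ((hpt w hwS).dist tendsto_const_nhds) hev2
    refine ⟨r, hr, hev, fun w hw => ?_⟩
    rcases eq_or_lt_of_le (show (0:ℝ) ≤ w.im from hSsub hw.2) with hwim | hwim
    · -- boundary point w
      have hwim0 : w.im = 0 := hwim.symm
      obtain ⟨δ, hδ, hδmem⟩ := happroach w hw.2
      have hrw : 0 < r - dist w z := by
        have := Metric.mem_ball.1 hw.1; linarith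
      have hevt : ∀ᶠ t in 𝓝[>] (0 : ℝ), dist (g w t) (ubar z) ≤ ε := by
        filter_upwards [eventually_mem_set.2
          (Ioo_mem_nhdsGT_of_mem (α := ℝ) ⟨le_refl _, lt_min hδ hrw⟩)] with t ht
        have htδ : t ∈ Set.Ioo (0:ℝ) δ := ⟨ht.1, lt_of_lt_of_le ht.2 (min_le_left _ _)⟩
        have hwt : w + (t : ℂ) * Complex.I ∈ S ∩ {x : ℂ | 0 < x.im} := hδmem t htδ
        have hball : w + (t : ℂ) * Complex.I ∈ Metric.ball z r := by
          rw [Metric.mem_ball]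
          calc dist (w + (t : ℂ) * Complex.I) z
              ≤ dist (w + (t : ℂ) * Complex.I) w + dist w z := dist_triangle _ _ _
            _ = t + dist w z := by rw [hdist w t ht.1]
            _ < r := by
                have := lt_of_lt_of_le ht.2 (min_le_right δ (r - dist w z)); linarith
        exact hint _ ⟨hball, hwt.1⟩ hwt.2
      have := le_of_tendsto ((hlim w hw.2 hwim0).dist
        (tendsto_const_nhds : Tendsto (fun _ : ℝ => ubar z) (𝓝[>] (0:ℝ)) _)) hevt
      exact this
    · rw [hubar_int w hwim]
      exact hint w hw hwim
  refine ⟨ubar, ?_, ?_, ?_⟩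
  · -- continuity
    intro z hz
    rw [Metric.continuousWithinAt_iff]
    intro ε hε
    obtain ⟨r, hr, _, hnear⟩ := near z hz (ε/2) (by linarith)
    refine ⟨r, hr, fun y hy hyz => ?_⟩
    have := hnear y ⟨Metric.mem_ball.2 hyz, hy⟩
    linarith
  · intro z hz
    exact hubar_int z hz.2
  · -- uniform convergence on compacts
    intro K hKS hK
    rw [Metric.tendstoUniformlyOn_iff]
    intro ε hε
    have hch : ∀ z : ℂ, ∃ r > 0, z ∈ K →
        (∀ᶠ i in atTop, ∀ w ∈ Metric.ball z r ∩ Si i, dist (u i w) (ubar z) < ε/3) ∧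
        (∀ w ∈ Metric.ball z r ∩ S, dist (ubar w) (ubar z) ≤ ε/3) := by
      intro z
      by_cases hz : z ∈ K
      · obtain ⟨r, hr, h1, h2⟩ := near z (hKS hz) (ε/3) (by linarith)
        exact ⟨r, hr, fun _ => ⟨h1, h2⟩⟩
      · exact ⟨1, one_pos, fun h => absurd h hz⟩
    choose r hrpos hprop using hch
    obtain ⟨T, hTK, hcover⟩ := hK.elim_nhds_subcover (fun z => Metric.ball z (r z))
      (fun z _ => Metric.ball_mem_nhds z (hrpos z))
    have hallT : ∀ᶠ i in atTop, ∀ z ∈ T, ∀ w ∈ Metric.ball z (r z) ∩ Si i,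
        dist (u i w) (ubar z) < ε/3 :=
      (eventually_all_finset T).2 (fun z hz => (hprop z (hTK z hz)).1)
    filter_upwards [hexh K hKS hK, hallT] with i hKSi hT
    intro w hw
    have hwS : w ∈ S := hKS hw
    obtain ⟨z, hzT, hzball⟩ : ∃ z ∈ T, w ∈ Metric.ball z (r z) := by
      have := hcover hw
      simpa using this
    have h1 : dist (u i w) (ubar z) < ε/3 := hT z hzT w ⟨hzball, hKSi hw⟩
    have h2 : dist (ubar w) (ubar z) ≤ ε/3 := (hprop z (hTK z hzT)).2 w ⟨hzball, hwS⟩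
    calc dist (ubar w) (u i w) ≤ dist (ubar w) (ubar z) + dist (ubar z) (u i w) :=
          dist_triangle _ _ _
      _ < ε/3 + ε/3 := by rw [dist_comm (ubar z) (u i w)]; linarith
      _ < ε := by linarith
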